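/- (Expectation of the smoothed path-graph statistic.) Under the weighted stochastic block model in which each conditional distribution F_{z_1,z_2} admits a density f_{z_1,z_2} that is bounded and twice differentiable with second derivative bounded by B, and with a bounded symmetric kernel k integrating to one with ∫ u² |k(u)| du < ∞, there is a constant C (depending only on B, the bounds on the α's, and the kernel) such that for all x ∈ ℝ and h > 0, and distinct nodes 1, 2, 3, 4, |E(α_{l_1}(X_{1,2}) h⁻¹ k((X_{2,3} − x)/h) α_{l_2}(X_{3,4})) − Σ_{z_1,z_2} (G)_{l_1,z_1} f_{z_1,z_2}(x) p_{z_1} p_{z_2} (G)_{l_2,z_2}| ≤ C h². -/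

import Mathlib

open MeasureTheory

/-- The weighted stochastic block model on `n` nodes with `r` latent communities:
community labels `Z i` are i.i.d. with distribution `p`; edge weights `X i j = X j i`
are, conditionally on the labels, mutually independent with conditional CDF
`F (Z i) (Z j)` (encoded through the joint conditional CDF factorization `X_cond`). -/
structure SBM (Ω : Type) [MeasurableSpace Ω] (ℙ : Measure Ω) (n r : ℕ) where
  /-- the community distribution -/
  p : Fin r → ℝ
  /-- the community labels -/
  Z : Fin n → Ω → Fin r
  /-- the edge weights -/
  X : Fin n → Fin n → Ω → ℝ
  /-- the conditional CDFs -/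
  F : Fin r → Fin r → ℝ → ℝ
  prob : IsProbabilityMeasure ℙ
  p_pos : ∀ z, 0 < p z
  p_sum : ∑ z, p z = 1
  Z_meas : ∀ i, Measurable (Z i)
  X_meas : ∀ i j, Measurable (X i j)
  X_symm : ∀ i j, X i j = X j i
  F_symm : ∀ z₁ z₂, F z₁ z₂ = F z₂ z₁
  /-- the labels are i.i.d. with distribution `p` -/
  Z_iid : ∀ z : Fin n → Fin r,
    ℙ {ω | ∀ i, Z i ω = z i} = ENNReal.ofReal (∏ i, p (z i))
  /-- conditionally on the labels, the edge weights are mutually independent and the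
  conditional CDF of `X i j` given `Z i = z i`, `Z j = z j` is `F (z i) (z j)` -/
  X_cond : ∀ (z : Fin n → Fin r) (S : Finset (Fin n × Fin n)),
    (∀ q ∈ S, q.1 < q.2) → ∀ x : Fin n × Fin n → ℝ,
      ℙ ({ω | ∀ q ∈ S, X q.1 q.2 ω ≤ x q} ∩ {ω | ∀ i, Z i ω = z i})
        = ENNReal.ofReal ((∏ q ∈ S, F (z q.1) (z q.2) (x q)) * ∏ i, p (z i))


section AuxComb
open Finset

lemma fiber_sum {n r : ℕ} (w : Fin r → ℝ) (hw : ∑ a, w a = 1) (s : Finset (Fin n))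
    (φ : Fin n → Fin r) :
    ∑ z ∈ Finset.univ.filter (fun z : Fin n → Fin r => ∀ i ∈ s, z i = φ i), ∏ i, w (z i)
      = ∏ i ∈ s, w (φ i) := by
  classical
  have hset : Finset.univ.filter (fun z : Fin n → Fin r => ∀ i ∈ s, z i = φ i)
      = Fintype.piFinset (fun i => if i ∈ s then {φ i} else Finset.univ) := by
    ext z
    simp only [Finset.mem_filter, Finset.mem_univ, true_and, Fintype.mem_piFinset]
    constructor
    · intro h i; by_cases hi : i ∈ s <;> simp [hi, h]
    · intro h i hi; have := h i; simp [hi] at this; exact this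
  rw [hset, ← Finset.prod_univ_sum]
  have : ∀ i, (∑ j ∈ (if i ∈ s then ({φ i} : Finset (Fin r)) else Finset.univ), w j)
      = if i ∈ s then w (φ i) else 1 := by
    intro i; by_cases hi : i ∈ s <;> simp [hi, hw]
  rw [Finset.prod_congr rfl (fun i _ => this i)]
  simpa using Finset.prod_ite_mem Finset.univ s (fun i => w (φ i))

lemma sum_labels {n r : ℕ} (w : Fin r → ℝ) (hw : ∑ a, w a = 1)
    (i₁ i₂ i₃ i₄ : Fin n)
    (h12 : i₁ ≠ i₂) (h13 : i₁ ≠ i₃) (h14 : i₁ ≠ i₄)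
    (h23 : i₂ ≠ i₃) (h24 : i₂ ≠ i₄) (h34 : i₃ ≠ i₄)
    (g : Fin r → Fin r → Fin r → Fin r → ℝ) :
    ∑ z : Fin n → Fin r, (∏ i, w (z i)) * g (z i₁) (z i₂) (z i₃) (z i₄)
      = ∑ a, ∑ b, ∑ c, ∑ d, w a * w b * w c * w d * g a b c d := by
  classical
  rw [← Finset.sum_fiberwise Finset.univ (fun z : Fin n → Fin r => (z i₁, z i₂, z i₃, z i₄))
    (fun z => (∏ i, w (z i)) * g (z i₁) (z i₂) (z i₃) (z i₄))]
  rw [Fintype.sum_prod_type]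
  refine Finset.sum_congr rfl fun a _ => ?_
  rw [Fintype.sum_prod_type]
  refine Finset.sum_congr rfl fun b _ => ?_
  rw [Fintype.sum_prod_type]
  refine Finset.sum_congr rfl fun c _ =>
    Finset.sum_congr rfl fun d _ => ?_
  set φ : Fin n → Fin r := fun i =>
    if i = i₁ then a else if i = i₂ then b else if i = i₃ then c else d with hφ
  have hfib : (Finset.univ.filter
        (fun z : Fin n → Fin r => (z i₁, z i₂, z i₃, z i₄) = (a, b, c, d)))
      = Finset.univ.filter
        (fun z : Fin n → Fin r => ∀ i ∈ ({i₁, i₂, i₃, i₄} : Finset (Fin n)), z i = φ i) := by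
    ext z
    simp only [Finset.mem_filter, Finset.mem_univ, true_and, Prod.mk.injEq,
      Finset.mem_insert, Finset.mem_singleton]
    constructor
    · rintro ⟨h1, h2, h3, h4⟩ i hi
      rcases hi with rfl | rfl | rfl | rfl <;>
        simp [hφ, h1, h2, h3, h4, h12, h13, h14, h23, h24, h34,
          h12.symm, h13.symm, h14.symm, h23.symm, h24.symm, h34.symm]
    · intro h
      refine ⟨?_, ?_, ?_, ?_⟩ <;>
        [have := h i₁ (by simp); have := h i₂ (by simp); have := h i₃ (by simp);
         have := h i₄ (by simp)] <;>
        simpa [hφ, h12, h13, h14, h23, h24, h34,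
          h12.symm, h13.symm, h14.symm, h23.symm, h24.symm, h34.symm] using this
  have hconst : ∀ z ∈ Finset.univ.filter
      (fun z : Fin n → Fin r => (z i₁, z i₂, z i₃, z i₄) = (a, b, c, d)),
      (∏ i, w (z i)) * g (z i₁) (z i₂) (z i₃) (z i₄) = (∏ i, w (z i)) * g a b c d := by
    intro z hz
    simp only [Finset.mem_filter, Prod.mk.injEq] at hz
    rw [hz.2.1, hz.2.2.1, hz.2.2.2.1, hz.2.2.2.2]
  rw [Finset.sum_congr rfl hconst, ← Finset.sum_mul, hfib, fiber_sum w hw]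
  have hprod : ∏ i ∈ ({i₁, i₂, i₃, i₄} : Finset (Fin n)), w (φ i) = w a * w b * w c * w d := by
    rw [Finset.prod_insert (by simp [h12, h13, h14]),
        Finset.prod_insert (by simp [h23, h24]),
        Finset.prod_insert (by simp [h34]), Finset.prod_singleton]
    simp [hφ, Ne.symm h12, Ne.symm h13, Ne.symm h14, Ne.symm h23, Ne.symm h24, Ne.symm h34]
    ring
  rw [hprod]

end AuxComb

section AuxAnalysis
open MeasureTheory Set
open scoped NNReal ENNReal

lemma taylor2_bound (f : ℝ → ℝ) (B : ℝ)
    (hd1 : ∀ u, DifferentiableAt ℝ f u)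
    (hd2 : ∀ u, DifferentiableAt ℝ (deriv f) u)
    (hB : ∀ u, |deriv (deriv f) u| ≤ B)
    (x t : ℝ) : |f (x + t) - f x - deriv f x * t| ≤ B * t ^ 2 := by
  have step1 : ∀ y z : ℝ, |deriv f y - deriv f z| ≤ B * |y - z| := by
    intro y z
    have := (convex_univ (𝕜 := ℝ) (E := ℝ)).norm_image_sub_le_of_norm_deriv_le
      (f := deriv f) (fun u _ => hd2 u) (fun u _ => hB u) (mem_univ z) (mem_univ y)
    simpa [Real.norm_eq_abs] using this
  set g : ℝ → ℝ := fun s => f (x + s) - f x - deriv f x * s with hg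
  have hgd : ∀ s, HasDerivAt g (deriv f (x + s) - deriv f x) s := by
    intro s
    have h1 : HasDerivAt (fun s : ℝ => f (x + s)) (deriv f (x + s)) s := by
      have := ((hd1 (x + s)).hasDerivAt).comp s ((hasDerivAt_id s).const_add x)
      rw [mul_one] at this; exact this
    have h2 := (h1.sub_const (f x)).sub ((hasDerivAt_id s).const_mul (deriv f x))
    rw [mul_one] at h2; exact h2
  have hbound : ∀ s ∈ uIcc (0 : ℝ) t, ‖deriv g s‖ ≤ B * |t| := by
    intro s hs
    have hds : deriv g s = deriv f (x + s) - deriv f x := (hgd s).deriv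
    rw [hds, Real.norm_eq_abs]
    have h1 : |deriv f (x + s) - deriv f x| ≤ B * |s| := by
      have := step1 (x + s) x; simpa using this
    have hsle : |s| ≤ |t| := by
      rcases le_total (0:ℝ) t with ht | ht
      · rw [uIcc_of_le ht] at hs
        rw [abs_of_nonneg hs.1, abs_of_nonneg ht]; exact hs.2
      · rw [uIcc_of_ge ht] at hs
        rw [abs_of_nonpos hs.2, abs_of_nonpos ht]; linarith [hs.1]
    have hB0 : 0 ≤ B := le_trans (abs_nonneg _) (hB 0)
    calc |deriv f (x + s) - deriv f x| ≤ B * |s| := h1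
    _ ≤ B * |t| := by nlinarith
  have key : ‖g t - g 0‖ ≤ B * |t| * ‖t - 0‖ :=
    (convex_uIcc (0:ℝ) t).norm_image_sub_le_of_norm_deriv_le
      (fun s _ => (hgd s).differentiableAt) hbound left_mem_uIcc right_mem_uIcc
  have hg0 : g 0 = 0 := by simp [hg]
  rw [hg0, sub_zero, sub_zero, Real.norm_eq_abs, Real.norm_eq_abs] at key
  calc |g t| ≤ B * |t| * |t| := key
  _ = B * t ^ 2 := by
    rw [mul_assoc, ← abs_mul, show t * t = t ^ 2 by ring, abs_of_nonneg (sq_nonneg t)]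

lemma kernel_smooth (f : ℝ → ℝ) (B Cf : ℝ)
    (hmeas : Measurable f) (hnn : ∀ u, 0 ≤ f u) (hbdd : ∀ u, f u ≤ Cf)
    (hd1 : ∀ u, DifferentiableAt ℝ f u)
    (hd2 : ∀ u, DifferentiableAt ℝ (deriv f) u)
    (hB : ∀ u, |deriv (deriv f) u| ≤ B)
    (k : ℝ → ℝ) (hk_meas : Measurable k) (hk_symm : ∀ u, k (-u) = k u)
    (hk_one : ∫ u, k u = 1) (hk_mom : Integrable fun u => u ^ 2 * |k u|)
    (x h : ℝ) (hh : 0 < h) :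
    |(∫ u, (h⁻¹ * k ((u - x) / h)) * f u) - f x|
      ≤ (B * ∫ v, v ^ 2 * |k v|) * h ^ 2 := by
  have hk_int : Integrable k := by
    by_contra hc
    rw [integral_undef hc] at hk_one
    norm_num at hk_one
  -- substitution
  set G : ℝ → ℝ := fun w => k (w / h) * f (x + w) with hG
  have subst : (∫ u, (h⁻¹ * k ((u - x) / h)) * f u) = ∫ v, k v * f (x + h * v) := by
    have e1 : (∫ u, (h⁻¹ * k ((u - x) / h)) * f u)
        = ∫ w, (h⁻¹ * k (w / h)) * f (x + w) := by
      rw [← integral_add_right_eq_self (fun u => (h⁻¹ * k ((u - x) / h)) * f u) x]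
      congr 1; ext w
      rw [show w + x - x = w by ring, show w + x = x + w by ring]
    have e2 : (∫ w, (h⁻¹ * k (w / h)) * f (x + w)) = h⁻¹ * ∫ w, G w := by
      rw [← integral_const_mul]
      congr 1; ext w; rw [hG]; ring
    have e3 : (∫ v : ℝ, G (h * v)) = |h⁻¹| • ∫ w, G w :=
      Measure.integral_comp_mul_left G h
    have e4 : ∀ v : ℝ, G (h * v) = k v * f (x + h * v) := by
      intro v; rw [hG]; simp only
      rw [mul_div_cancel_left₀ v hh.ne']
    rw [e1, e2]
    rw [show (∫ v : ℝ, k v * f (x + h * v)) = ∫ v : ℝ, G (h * v) by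
      congr 1; ext v; rw [e4]]
    rw [e3, abs_of_pos (inv_pos.mpr hh), smul_eq_mul]
  set R : ℝ → ℝ := fun v => f (x + h * v) - f x - deriv f x * (h * v) with hR
  have hRb : ∀ v, |R v| ≤ B * h ^ 2 * v ^ 2 := by
    intro v
    have := taylor2_bound f B hd1 hd2 hB x (h * v)
    calc |R v| ≤ B * (h * v) ^ 2 := this
    _ = B * h ^ 2 * v ^ 2 := by ring
  have hI1 : Integrable (fun v => k v * f x) := hk_int.mul_const _
  have hvk : Integrable (fun v : ℝ => v * k v) := by
    refine Integrable.mono' (hk_int.abs.add hk_mom)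
      ((measurable_id.mul hk_meas).aestronglyMeasurable) (Filter.Eventually.of_forall ?_)
    intro v
    have h1 : |v| ≤ 1 + v ^ 2 := by nlinarith [sq_abs v, abs_nonneg v, sq_nonneg (|v| - 1)]
    have : ‖v * k v‖ = |v| * |k v| := by rw [Real.norm_eq_abs, abs_mul]
    rw [this]
    calc |v| * |k v| ≤ (1 + v ^ 2) * |k v| :=
      mul_le_mul_of_nonneg_right h1 (abs_nonneg _)
    _ = |k v| + v ^ 2 * |k v| := by ring
  have hI2 : Integrable (fun v => deriv f x * h * (v * k v)) := hvk.const_mul _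
  have hRmeas : Measurable R := by
    apply Measurable.sub
    apply Measurable.sub
    · exact hmeas.comp (measurable_const.add (measurable_const.mul measurable_id))
    · exact measurable_const
    · exact measurable_const.mul (measurable_const.mul measurable_id)
  have hI3 : Integrable (fun v => k v * R v) := by
    refine Integrable.mono' (hk_mom.const_mul (B * h ^ 2))
      ((hk_meas.mul hRmeas).aestronglyMeasurable) (Filter.Eventually.of_forall ?_)
    intro v
    rw [Real.norm_eq_abs, abs_mul]
    calc |k v| * |R v| ≤ |k v| * (B * h ^ 2 * v ^ 2) :=
      mul_le_mul_of_nonneg_left (hRb v) (abs_nonneg _)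
    _ = B * h ^ 2 * (v ^ 2 * |k v|) := by ring
  have hsplit : ∀ v, k v * f (x + h * v)
      = k v * f x + deriv f x * h * (v * k v) + k v * R v := by
    intro v; rw [hR]; ring
  have hodd : (∫ v : ℝ, v * k v) = 0 := by
    have h1 : (∫ v : ℝ, -v * k (-v)) = ∫ v : ℝ, v * k v :=
      integral_neg_eq_self (fun v : ℝ => v * k v) volume
    have h2 : (∫ v : ℝ, -v * k (-v)) = ∫ v : ℝ, -(v * k v) := by
      congr 1; ext v; rw [hk_symm]; ring
    rw [h2, integral_neg] at h1
    linarith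
  have hint : (∫ v, k v * f (x + h * v))
      = f x + 0 + ∫ v, k v * R v := by
    have hI12 : Integrable (fun v => k v * f x + deriv f x * h * (v * k v)) :=
      hI1.add hI2
    rw [show (fun v => k v * f (x + h * v))
        = fun v => (k v * f x + deriv f x * h * (v * k v)) + k v * R v from funext hsplit]
    rw [integral_add hI12 hI3, integral_add hI1 hI2]
    congr 1
    congr 1
    · rw [integral_mul_const, hk_one, one_mul]
    · rw [integral_const_mul, hodd, mul_zero]
  have hfinal : |∫ v, k v * R v| ≤ B * (∫ v, v ^ 2 * |k v|) * h ^ 2 := by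
    have h1 : |∫ v, k v * R v| ≤ ∫ v, |k v * R v| := by
      simpa only [Real.norm_eq_abs] using
        norm_integral_le_integral_norm (μ := volume) (fun v => k v * R v)
    have h2 : (∫ v, |k v * R v|) ≤ ∫ v, B * h ^ 2 * (v ^ 2 * |k v|) := by
      refine integral_mono hI3.abs (hk_mom.const_mul _) ?_
      intro v
      dsimp only
      rw [abs_mul]
      calc |k v| * |R v| ≤ |k v| * (B * h ^ 2 * v ^ 2) :=
        mul_le_mul_of_nonneg_left (hRb v) (abs_nonneg _)
      _ = B * h ^ 2 * (v ^ 2 * |k v|) := by ring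
    rw [integral_const_mul] at h2
    calc |∫ v, k v * R v| ≤ B * h ^ 2 * ∫ v, v ^ 2 * |k v| := le_trans h1 h2
    _ = B * (∫ v, v ^ 2 * |k v|) * h ^ 2 := by ring
  rw [subst, hint]
  simpa using hfinal

noncomputable def densM (f : ℝ → ℝ) : Measure ℝ :=
  volume.withDensity (fun u => ENNReal.ofReal (f u))


lemma densM_Iic (f : ℝ → ℝ) (hnn : ∀ u, 0 ≤ f u) {x : ℝ}
    (hint : IntegrableOn f (Set.Iic x)) :
    densM f (Set.Iic x) = ENNReal.ofReal (∫ u in Set.Iic x, f u) := by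
  rw [densM, withDensity_apply _ measurableSet_Iic,
    ← ofReal_integral_eq_lintegral_ofReal hint
      (Filter.Eventually.of_forall (fun u => hnn u))]

lemma densM_integrableOn (f : ℝ → ℝ)
    (htend : Filter.Tendsto (fun m : ℕ => ∫ u in Set.Iic (m : ℝ), f u)
      Filter.atTop (nhds 1)) (x : ℝ) :
    IntegrableOn f (Set.Iic x) := by
  by_contra hc
  have hev := (htend.eventually_ne (by norm_num : (1:ℝ) ≠ 0)).and
    (Filter.eventually_ge_atTop ⌈x⌉₊)
  obtain ⟨m, hm1, hm2⟩ := hev.exists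
  have hxm : x ≤ (m : ℝ) := le_trans (Nat.le_ceil x) (Nat.cast_le.mpr hm2)
  have : ¬ IntegrableOn f (Set.Iic (m : ℝ)) := fun hI => hc (hI.mono_set (Iic_subset_Iic.mpr hxm))
  exact hm1 (integral_undef this)

lemma densM_prob (f : ℝ → ℝ) (hnn : ∀ u, 0 ≤ f u)
    (htend : Filter.Tendsto (fun m : ℕ => ∫ u in Set.Iic (m : ℝ), f u)
      Filter.atTop (nhds 1)) :
    IsProbabilityMeasure (densM f) := by
  constructor
  have hmono : Monotone (fun m : ℕ => Set.Iic (m : ℝ)) :=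
    fun a b hab => Iic_subset_Iic.mpr (Nat.cast_le.mpr hab)
  have hun : (⋃ m : ℕ, Set.Iic (m : ℝ)) = univ := by
    ext y; simp only [mem_iUnion, mem_Iic, mem_univ, iff_true]
    obtain ⟨m, hm⟩ := exists_nat_ge y
    exact ⟨m, hm⟩
  have h1 : Filter.Tendsto (fun m : ℕ => densM f (Set.Iic (m : ℝ)))
      Filter.atTop (nhds (densM f univ)) := by
    have := tendsto_measure_iUnion_atTop (μ := densM f) hmono
    rwa [hun] at this
  have h2 : Filter.Tendsto (fun m : ℕ => densM f (Set.Iic (m : ℝ)))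
      Filter.atTop (nhds 1) := by
    have heq : ∀ m : ℕ, densM f (Set.Iic (m : ℝ))
        = ENNReal.ofReal (∫ u in Set.Iic (m : ℝ), f u) :=
      fun m => densM_Iic f hnn (densM_integrableOn f htend _)
    simp only [heq]
    have := (ENNReal.continuous_ofReal.tendsto 1).comp htend
    simpa [Function.comp_def] using this
  exact tendsto_nhds_unique h1 h2

lemma densM_integral (f : ℝ → ℝ) (hm : Measurable f) (hnn : ∀ u, 0 ≤ f u) (g : ℝ → ℝ) :
    ∫ y, g y ∂(densM f) = ∫ u, f u * g u := by
  rw [densM]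
  rw [show (fun u => ENNReal.ofReal (f u))
      = (fun u => ((Real.toNNReal (f u) : ℝ≥0) : ℝ≥0∞)) from rfl]
  rw [integral_withDensity_eq_integral_smul hm.real_toNNReal g]
  congr 1; ext u
  rw [NNReal.smul_def, smul_eq_mul, Real.coe_toNNReal _ (hnn u)]

lemma bdd_integrable' {Ω : Type} [MeasurableSpace Ω] {ℙ : Measure Ω} [IsFiniteMeasure ℙ]
    (g : Ω → ℝ) (hg : Measurable g) (C : ℝ) (hC : ∀ ω, |g ω| ≤ C) :
    Integrable g ℙ := by
  refine Integrable.mono' (integrable_const C) hg.aestronglyMeasurable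
    (Filter.Eventually.of_forall fun ω => ?_)
  simpa [Real.norm_eq_abs] using hC ω

section Gen

lemma gen_Iic : (inferInstance : MeasurableSpace ℝ) = .generateFrom (range Iic) := by
  rw [BorelSpace.measurable_eq (α := ℝ)]
  exact borel_eq_generateFrom_Iic ℝ

lemma span_Iic : IsCountablySpanning (range (Iic : ℝ → Set ℝ)) := by
  refine ⟨fun m => Iic (m : ℝ), fun m => mem_range_self _, ?_⟩
  ext y; simp only [mem_iUnion, mem_Iic, mem_univ, iff_true]
  exact exists_nat_ge y

def C2 : Set (Set (ℝ × ℝ)) := image2 (· ×ˢ ·) (range Iic) (range Iic)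
def C3 : Set (Set (ℝ × ℝ × ℝ)) := image2 (· ×ˢ ·) (range Iic) C2

lemma span_C2 : IsCountablySpanning C2 := by
  refine ⟨fun m => Iic (m : ℝ) ×ˢ Iic (m : ℝ),
    fun m => mem_image2_of_mem (mem_range_self _) (mem_range_self _), ?_⟩
  ext y
  simp only [mem_iUnion, mem_prod, mem_Iic, mem_univ, iff_true]
  obtain ⟨m1, hm1⟩ := exists_nat_ge y.1
  obtain ⟨m2, hm2⟩ := exists_nat_ge y.2
  exact ⟨max m1 m2, le_trans hm1 (by exact_mod_cast le_max_left m1 m2),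
    le_trans hm2 (by exact_mod_cast le_max_right m1 m2)⟩

lemma gen_C2 : MeasurableSpace.generateFrom C2 = (inferInstance : MeasurableSpace (ℝ × ℝ)) :=
  generateFrom_eq_prod gen_Iic.symm gen_Iic.symm span_Iic span_Iic

lemma gen_C3 : MeasurableSpace.generateFrom C3 = (inferInstance : MeasurableSpace (ℝ × ℝ × ℝ)) :=
  generateFrom_eq_prod gen_Iic.symm gen_C2 span_Iic span_C2

lemma pi_C3 : IsPiSystem C3 := by
  rintro s ⟨Ia, ⟨a, rfl⟩, t, ⟨Ib, ⟨b, rfl⟩, Ic, ⟨c, rfl⟩, rfl⟩, rfl⟩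
    s' ⟨Ia', ⟨a', rfl⟩, t', ⟨Ib', ⟨b', rfl⟩, Ic', ⟨c', rfl⟩, rfl⟩, rfl⟩ _
  rw [Set.prod_inter_prod, Set.prod_inter_prod, Iic_inter_Iic, Iic_inter_Iic, Iic_inter_Iic]
  exact mem_image2_of_mem (mem_range_self _)
    (mem_image2_of_mem (mem_range_self _) (mem_range_self _))

end Gen

namespace SBM

variable {Ω : Type} [MeasurableSpace Ω] {ℙ : Measure Ω} {n r : ℕ} (sbm : SBM Ω ℙ n r)

lemma Ez_meas (z : Fin n → Fin r) : MeasurableSet {ω | ∀ i, sbm.Z i ω = z i} := by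
  have : {ω | ∀ i, sbm.Z i ω = z i} = ⋂ i, (sbm.Z i) ⁻¹' {z i} := by
    ext ω; simp [Set.mem_iInter]
  rw [this]
  exact MeasurableSet.iInter fun i => (sbm.Z_meas i) (measurableSet_singleton _)

lemma threepair
    (f : Fin r → Fin r → ℝ → ℝ)
    (hFnn : ∀ a b x, 0 ≤ sbm.F a b x)
    (hIic : ∀ a b x, densM (f a b) (Iic x) = ENNReal.ofReal (sbm.F a b x))
    (hprob : ∀ a b, IsProbabilityMeasure (densM (f a b)))
    (q₁ q₂ q₃ : Fin n × Fin n)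
    (hq1 : q₁.1 < q₁.2) (hq2 : q₂.1 < q₂.2) (hq3 : q₃.1 < q₃.2)
    (h12 : q₁ ≠ q₂) (h13 : q₁ ≠ q₃) (h23 : q₂ ≠ q₃)
    (z : Fin n → Fin r) :
    Measure.map
        (fun ω => (sbm.X q₁.1 q₁.2 ω, sbm.X q₂.1 q₂.2 ω, sbm.X q₃.1 q₃.2 ω))
        (ℙ.restrict {ω | ∀ i, sbm.Z i ω = z i})
      = ENNReal.ofReal (∏ i, sbm.p (z i)) •
          ((densM (f (z q₁.1) (z q₁.2))).prod
            ((densM (f (z q₂.1) (z q₂.2))).prod (densM (f (z q₃.1) (z q₃.2))))) := by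
  classical
  haveI := sbm.prob
  haveI := hprob (z q₁.1) (z q₁.2)
  haveI := hprob (z q₂.1) (z q₂.2)
  haveI := hprob (z q₃.1) (z q₃.2)
  have hT : Measurable (fun ω => (sbm.X q₁.1 q₁.2 ω, sbm.X q₂.1 q₂.2 ω, sbm.X q₃.1 q₃.2 ω)) :=
    (sbm.X_meas _ _).prodMk ((sbm.X_meas _ _).prodMk (sbm.X_meas _ _))
  have hpnn : (0:ℝ) ≤ ∏ i, sbm.p (z i) := Finset.prod_nonneg fun i _ => (sbm.p_pos _).le
  haveI : IsFiniteMeasure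
      (ENNReal.ofReal (∏ i, sbm.p (z i)) •
        ((densM (f (z q₁.1) (z q₁.2))).prod
          ((densM (f (z q₂.1) (z q₂.2))).prod (densM (f (z q₃.1) (z q₃.2)))))) := by
    constructor
    rw [Measure.smul_apply, smul_eq_mul]
    exact ENNReal.mul_lt_top ENNReal.ofReal_lt_top (measure_lt_top _ _)
  refine ext_of_generate_finite C3 gen_C3.symm pi_C3 ?_ ?_
  · rintro s ⟨Ia, ⟨a, rfl⟩, t, ⟨Ib, ⟨b, rfl⟩, Ic, ⟨c, rfl⟩, rfl⟩, rfl⟩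
    set S : Finset (Fin n × Fin n) := {q₁, q₂, q₃} with hS
    set xf : Fin n × Fin n → ℝ := fun q => if q = q₁ then a else if q = q₂ then b else c with hxf
    have hmemS : ∀ q ∈ S, q.1 < q.2 := by
      intro q hq
      rcases Finset.mem_insert.mp hq with rfl | hq'
      · exact hq1
      rcases Finset.mem_insert.mp hq' with rfl | hq''
      · exact hq2
      · rw [Finset.mem_singleton.mp hq'']; exact hq3
    have hpre : (fun ω => (sbm.X q₁.1 q₁.2 ω, sbm.X q₂.1 q₂.2 ω, sbm.X q₃.1 q₃.2 ω)) ⁻¹'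
          (Iic a ×ˢ Iic b ×ˢ Iic c)
        = {ω | ∀ q ∈ S, sbm.X q.1 q.2 ω ≤ xf q} := by
      ext ω
      simp only [mem_preimage, mem_prod, mem_Iic, Set.mem_setOf_eq, hS, Finset.mem_insert,
        Finset.mem_singleton]
      constructor
      · rintro ⟨hA, hB, hC⟩ q hq
        rcases hq with rfl | rfl | rfl
        · simpa [hxf] using hA
        · simpa [hxf, if_neg (Ne.symm h12)] using hB
        · simpa [hxf, if_neg (Ne.symm h13), if_neg (Ne.symm h23)] using hC
      · intro hall
        refine ⟨?_, ?_, ?_⟩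
        · simpa [hxf] using hall q₁ (Or.inl rfl)
        · simpa [hxf, if_neg (Ne.symm h12)] using hall q₂ (Or.inr (Or.inl rfl))
        · simpa [hxf, if_neg (Ne.symm h13), if_neg (Ne.symm h23)] using
            hall q₃ (Or.inr (Or.inr rfl))
    rw [Measure.map_apply hT (measurableSet_Iic.prod (measurableSet_Iic.prod measurableSet_Iic))]
    rw [Measure.restrict_apply' (sbm.Ez_meas z), hpre, sbm.X_cond z S hmemS xf]
    have hprodS : ∏ q ∈ S, sbm.F (z q.1) (z q.2) (xf q)
        = sbm.F (z q₁.1) (z q₁.2) a * (sbm.F (z q₂.1) (z q₂.2) b * sbm.F (z q₃.1) (z q₃.2) c) := by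
      rw [hS, Finset.prod_insert (by simp [h12, h13]),
        Finset.prod_insert (by simp [h23]), Finset.prod_singleton]
      congr 1
      · simp [hxf]
      congr 1
      · simp [hxf, if_neg (Ne.symm h12)]
      · simp [hxf, if_neg (Ne.symm h13), if_neg (Ne.symm h23)]
    rw [hprodS]
    rw [Measure.smul_apply, Measure.prod_prod, Measure.prod_prod, hIic, hIic, hIic, smul_eq_mul,
      ← ENNReal.ofReal_mul (hFnn _ _ _), ← ENNReal.ofReal_mul (hFnn _ _ _),
      ← ENNReal.ofReal_mul hpnn]
    congr 1
    ring
  · rw [Measure.map_apply hT MeasurableSet.univ, preimage_univ, Measure.restrict_apply_univ,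
      sbm.Z_iid z, Measure.smul_apply, smul_eq_mul]
    simp [measure_univ]

lemma onepair
    (f : Fin r → Fin r → ℝ → ℝ)
    (hFnn : ∀ a b x, 0 ≤ sbm.F a b x)
    (hIic : ∀ a b x, densM (f a b) (Iic x) = ENNReal.ofReal (sbm.F a b x))
    (hprob : ∀ a b, IsProbabilityMeasure (densM (f a b)))
    (q : Fin n × Fin n) (hq : q.1 < q.2) (z : Fin n → Fin r) :
    Measure.map (sbm.X q.1 q.2) (ℙ.restrict {ω | ∀ i, sbm.Z i ω = z i})
      = ENNReal.ofReal (∏ i, sbm.p (z i)) • densM (f (z q.1) (z q.2)) := by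
  classical
  haveI := sbm.prob
  haveI := hprob (z q.1) (z q.2)
  have hpnn : (0:ℝ) ≤ ∏ i, sbm.p (z i) := Finset.prod_nonneg fun i _ => (sbm.p_pos _).le
  haveI : IsFiniteMeasure (ENNReal.ofReal (∏ i, sbm.p (z i)) • densM (f (z q.1) (z q.2))) := by
    constructor
    rw [Measure.smul_apply, smul_eq_mul]
    exact ENNReal.mul_lt_top ENNReal.ofReal_lt_top (measure_lt_top _ _)
  refine ext_of_generate_finite (range Iic) gen_Iic isPiSystem_Iic ?_ ?_
  · rintro s ⟨a, rfl⟩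
    have hpre : sbm.X q.1 q.2 ⁻¹' Iic a
        = {ω | ∀ q' ∈ ({q} : Finset (Fin n × Fin n)), sbm.X q'.1 q'.2 ω ≤ (fun _ => a) q'} := by
      ext ω; simp [mem_Iic]
    rw [Measure.map_apply (sbm.X_meas _ _) measurableSet_Iic,
      Measure.restrict_apply' (sbm.Ez_meas z), hpre,
      sbm.X_cond z {q} (by simpa using hq) (fun _ => a), Finset.prod_singleton,
      Measure.smul_apply, hIic, smul_eq_mul, ← ENNReal.ofReal_mul hpnn]
    congr 1
    ring
  · rw [Measure.map_apply (sbm.X_meas _ _) MeasurableSet.univ, preimage_univ,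
      Measure.restrict_apply_univ, sbm.Z_iid z, Measure.smul_apply, smul_eq_mul]
    simp [measure_univ]

lemma densM_symm
    (f : Fin r → Fin r → ℝ → ℝ)
    (hIic : ∀ a b x, densM (f a b) (Iic x) = ENNReal.ofReal (sbm.F a b x))
    (hprob : ∀ a b, IsProbabilityMeasure (densM (f a b)))
    (a b : Fin r) : densM (f a b) = densM (f b a) := by
  haveI := hprob a b
  haveI := hprob b a
  refine ext_of_generate_finite (range Iic) gen_Iic isPiSystem_Iic ?_ ?_
  · rintro s ⟨x, rfl⟩
    rw [hIic, hIic, sbm.F_symm]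
  · rw [measure_univ, measure_univ]

lemma path_integral_oriented
    (f : Fin r → Fin r → ℝ → ℝ)
    (hFnn : ∀ a b x, 0 ≤ sbm.F a b x)
    (hIic : ∀ a b x, densM (f a b) (Iic x) = ENNReal.ofReal (sbm.F a b x))
    (hprob : ∀ a b, IsProbabilityMeasure (densM (f a b)))
    (q₁ q₂ q₃ : Fin n × Fin n)
    (hq1 : q₁.1 < q₁.2) (hq2 : q₂.1 < q₂.2) (hq3 : q₃.1 < q₃.2)
    (h12 : q₁ ≠ q₂) (h13 : q₁ ≠ q₃) (h23 : q₂ ≠ q₃)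
    (z : Fin n → Fin r) (g₁ g₂ g₃ : ℝ → ℝ)
    (hg₁ : Measurable g₁) (hg₂ : Measurable g₂) (hg₃ : Measurable g₃) :
    ∫ ω in {ω | ∀ i, sbm.Z i ω = z i},
        g₁ (sbm.X q₁.1 q₁.2 ω) * g₂ (sbm.X q₂.1 q₂.2 ω) * g₃ (sbm.X q₃.1 q₃.2 ω) ∂ℙ
      = (∏ i, sbm.p (z i)) *
          ((∫ y, g₁ y ∂densM (f (z q₁.1) (z q₁.2))) *
            ((∫ y, g₂ y ∂densM (f (z q₂.1) (z q₂.2))) *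
              (∫ y, g₃ y ∂densM (f (z q₃.1) (z q₃.2))))) := by
  haveI := hprob (z q₁.1) (z q₁.2)
  haveI := hprob (z q₂.1) (z q₂.2)
  haveI := hprob (z q₃.1) (z q₃.2)
  have hT : Measurable (fun ω => (sbm.X q₁.1 q₁.2 ω, sbm.X q₂.1 q₂.2 ω, sbm.X q₃.1 q₃.2 ω)) :=
    (sbm.X_meas _ _).prodMk ((sbm.X_meas _ _).prodMk (sbm.X_meas _ _))
  have hbig : Measurable (fun v : ℝ × ℝ × ℝ => g₁ v.1 * (g₂ v.2.1 * g₃ v.2.2)) :=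
    (hg₁.comp measurable_fst).mul
      ((hg₂.comp (measurable_fst.comp measurable_snd)).mul
        (hg₃.comp (measurable_snd.comp measurable_snd)))
  have hpnn : (0:ℝ) ≤ ∏ i, sbm.p (z i) := Finset.prod_nonneg fun i _ => (sbm.p_pos _).le
  have e0 : ∫ ω in {ω | ∀ i, sbm.Z i ω = z i},
        g₁ (sbm.X q₁.1 q₁.2 ω) * g₂ (sbm.X q₂.1 q₂.2 ω) * g₃ (sbm.X q₃.1 q₃.2 ω) ∂ℙ
      = ∫ ω, (fun v : ℝ × ℝ × ℝ => g₁ v.1 * (g₂ v.2.1 * g₃ v.2.2))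
          ((fun ω => (sbm.X q₁.1 q₁.2 ω, sbm.X q₂.1 q₂.2 ω, sbm.X q₃.1 q₃.2 ω)) ω)
          ∂(ℙ.restrict {ω | ∀ i, sbm.Z i ω = z i}) := by
    congr 1
    ext ω
    simp only
    ring
  rw [e0, ← integral_map hT.aemeasurable hbig.aestronglyMeasurable,
    sbm.threepair f hFnn hIic hprob q₁ q₂ q₃ hq1 hq2 hq3 h12 h13 h23 z,
    integral_smul_measure, ENNReal.toReal_ofReal hpnn, smul_eq_mul,
    integral_prod_mul g₁ (fun y : ℝ × ℝ => g₂ y.1 * g₃ y.2),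
    integral_prod_mul g₂ g₃]

lemma orient {n : ℕ} (i j : Fin n) (hij : i ≠ j) :
    ∃ q : Fin n × Fin n, q.1 < q.2 ∧ ((q.1 = i ∧ q.2 = j) ∨ (q.1 = j ∧ q.2 = i)) := by
  rcases lt_or_gt_of_ne hij with h | h
  · exact ⟨(i, j), h, Or.inl ⟨rfl, rfl⟩⟩
  · exact ⟨(j, i), h, Or.inr ⟨rfl, rfl⟩⟩

lemma path_integral
    (f : Fin r → Fin r → ℝ → ℝ)
    (hFnn : ∀ a b x, 0 ≤ sbm.F a b x)
    (hIic : ∀ a b x, densM (f a b) (Iic x) = ENNReal.ofReal (sbm.F a b x))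
    (hprob : ∀ a b, IsProbabilityMeasure (densM (f a b)))
    (i₁ i₂ i₃ i₄ : Fin n)
    (h12 : i₁ ≠ i₂) (h13 : i₁ ≠ i₃) (h14 : i₁ ≠ i₄)
    (h23 : i₂ ≠ i₃) (h24 : i₂ ≠ i₄) (h34 : i₃ ≠ i₄)
    (z : Fin n → Fin r) (g₁ g₂ g₃ : ℝ → ℝ)
    (hg₁ : Measurable g₁) (hg₂ : Measurable g₂) (hg₃ : Measurable g₃) :
    ∫ ω in {ω | ∀ i, sbm.Z i ω = z i},
        g₁ (sbm.X i₁ i₂ ω) * g₂ (sbm.X i₂ i₃ ω) * g₃ (sbm.X i₃ i₄ ω) ∂ℙ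
      = (∏ i, sbm.p (z i)) *
          ((∫ y, g₁ y ∂densM (f (z i₁) (z i₂))) *
            ((∫ y, g₂ y ∂densM (f (z i₂) (z i₃))) *
              (∫ y, g₃ y ∂densM (f (z i₃) (z i₄))))) := by
  obtain ⟨q₁, hlt1, hor1⟩ := orient i₁ i₂ h12
  obtain ⟨q₂, hlt2, hor2⟩ := orient i₂ i₃ h23
  obtain ⟨q₃, hlt3, hor3⟩ := orient i₃ i₄ h34
  have hq12 : q₁ ≠ q₂ := by
    rcases hor1 with ⟨e1, e2⟩ | ⟨e1, e2⟩ <;> rcases hor2 with ⟨e3, e4⟩ | ⟨e3, e4⟩ <;>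
      (intro hq; rw [Prod.ext_iff] at hq; obtain ⟨ha, hb⟩ := hq; simp_all)
  have hq13 : q₁ ≠ q₃ := by
    rcases hor1 with ⟨e1, e2⟩ | ⟨e1, e2⟩ <;> rcases hor3 with ⟨e3, e4⟩ | ⟨e3, e4⟩ <;>
      (intro hq; rw [Prod.ext_iff] at hq; obtain ⟨ha, hb⟩ := hq; simp_all)
  have hq23 : q₂ ≠ q₃ := by
    rcases hor2 with ⟨e1, e2⟩ | ⟨e1, e2⟩ <;> rcases hor3 with ⟨e3, e4⟩ | ⟨e3, e4⟩ <;>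
      (intro hq; rw [Prod.ext_iff] at hq; obtain ⟨ha, hb⟩ := hq; simp_all)
  have eX1 : sbm.X q₁.1 q₁.2 = sbm.X i₁ i₂ := by
    rcases hor1 with ⟨e1, e2⟩ | ⟨e1, e2⟩
    · rw [e1, e2]
    · rw [e1, e2]; exact sbm.X_symm i₂ i₁
  have eX2 : sbm.X q₂.1 q₂.2 = sbm.X i₂ i₃ := by
    rcases hor2 with ⟨e1, e2⟩ | ⟨e1, e2⟩
    · rw [e1, e2]
    · rw [e1, e2]; exact sbm.X_symm i₃ i₂
  have eX3 : sbm.X q₃.1 q₃.2 = sbm.X i₃ i₄ := by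
    rcases hor3 with ⟨e1, e2⟩ | ⟨e1, e2⟩
    · rw [e1, e2]
    · rw [e1, e2]; exact sbm.X_symm i₄ i₃
  have eM1 : densM (f (z q₁.1) (z q₁.2)) = densM (f (z i₁) (z i₂)) := by
    rcases hor1 with ⟨e1, e2⟩ | ⟨e1, e2⟩
    · rw [e1, e2]
    · rw [e1, e2]; exact sbm.densM_symm f hIic hprob (z i₂) (z i₁)
  have eM2 : densM (f (z q₂.1) (z q₂.2)) = densM (f (z i₂) (z i₃)) := by
    rcases hor2 with ⟨e1, e2⟩ | ⟨e1, e2⟩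
    · rw [e1, e2]
    · rw [e1, e2]; exact sbm.densM_symm f hIic hprob (z i₃) (z i₂)
  have eM3 : densM (f (z q₃.1) (z q₃.2)) = densM (f (z i₃) (z i₄)) := by
    rcases hor3 with ⟨e1, e2⟩ | ⟨e1, e2⟩
    · rw [e1, e2]
    · rw [e1, e2]; exact sbm.densM_symm f hIic hprob (z i₄) (z i₃)
  have := sbm.path_integral_oriented f hFnn hIic hprob q₁ q₂ q₃ hlt1 hlt2 hlt3
    hq12 hq13 hq23 z g₁ g₂ g₃ hg₁ hg₂ hg₃
  rw [eX1, eX2, eX3, eM1, eM2, eM3] at this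
  exact this

lemma pair_integral
    (f : Fin r → Fin r → ℝ → ℝ)
    (hFnn : ∀ a b x, 0 ≤ sbm.F a b x)
    (hIic : ∀ a b x, densM (f a b) (Iic x) = ENNReal.ofReal (sbm.F a b x))
    (hprob : ∀ a b, IsProbabilityMeasure (densM (f a b)))
    (i j : Fin n) (hij : i ≠ j) (z : Fin n → Fin r) (g : ℝ → ℝ) (hg : Measurable g) :
    ∫ ω in {ω | ∀ i', sbm.Z i' ω = z i'}, g (sbm.X i j ω) ∂ℙ
      = (∏ i', sbm.p (z i')) * ∫ y, g y ∂densM (f (z i) (z j)) := by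
  obtain ⟨q, hlt, hor⟩ := orient i j hij
  have eX : sbm.X q.1 q.2 = sbm.X i j := by
    rcases hor with ⟨e1, e2⟩ | ⟨e1, e2⟩
    · rw [e1, e2]
    · rw [e1, e2]; exact sbm.X_symm j i
  have eM : densM (f (z q.1) (z q.2)) = densM (f (z i) (z j)) := by
    rcases hor with ⟨e1, e2⟩ | ⟨e1, e2⟩
    · rw [e1, e2]
    · rw [e1, e2]; exact sbm.densM_symm f hIic hprob (z j) (z i)
  have hpnn : (0:ℝ) ≤ ∏ i', sbm.p (z i') := Finset.prod_nonneg fun _ _ => (sbm.p_pos _).le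
  have e0 : ∫ ω in {ω | ∀ i', sbm.Z i' ω = z i'}, g (sbm.X i j ω) ∂ℙ
      = ∫ ω, g ((sbm.X q.1 q.2) ω) ∂(ℙ.restrict {ω | ∀ i', sbm.Z i' ω = z i'}) := by
    rw [eX]
  rw [e0, ← integral_map (sbm.X_meas _ _).aemeasurable hg.aestronglyMeasurable,
    sbm.onepair f hFnn hIic hprob q hlt z, integral_smul_measure,
    ENNReal.toReal_ofReal hpnn, smul_eq_mul, eM]

lemma Ez_disj (z z' : Fin n → Fin r) (hzz : z ≠ z') :
    Disjoint {ω | ∀ i, sbm.Z i ω = z i} {ω | ∀ i, sbm.Z i ω = z' i} := by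
  rw [Set.disjoint_left]
  intro ω h1 h2
  exact hzz (funext fun i => (h1 i).symm.trans (h2 i))


lemma integral_partition (g : Ω → ℝ) (hg : Integrable g ℙ) (T : Finset (Fin n → Fin r)) :
    ∫ ω in ⋃ z ∈ T, {ω | ∀ i, sbm.Z i ω = z i}, g ω ∂ℙ
      = ∑ z ∈ T, ∫ ω in {ω | ∀ i, sbm.Z i ω = z i}, g ω ∂ℙ :=
  integral_biUnion_finset T (fun z _ => sbm.Ez_meas z)
    (fun z _ z' _ h => sbm.Ez_disj z z' h) (fun z _ => hg.integrableOn)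

lemma univ_eq_biUnion :
    (univ : Set Ω) = ⋃ z ∈ (Finset.univ : Finset (Fin n → Fin r)),
      {ω | ∀ i, sbm.Z i ω = z i} := by
  refine (Set.eq_univ_of_forall ?_).symm
  intro ω
  exact Set.mem_biUnion (Finset.mem_univ (fun i => sbm.Z i ω)) (fun i => rfl)

lemma Zi_eq_biUnion (i : Fin n) (a : Fin r) :
    {ω | sbm.Z i ω = a}
      = ⋃ z ∈ Finset.univ.filter (fun z : Fin n → Fin r => z i = a),
          {ω | ∀ j, sbm.Z j ω = z j} := by
  ext ω
  simp only [Set.mem_setOf_eq, Set.mem_iUnion, Finset.mem_coe, Finset.mem_filter,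
    Finset.mem_univ, true_and, exists_prop]
  constructor
  · intro hZa
    exact ⟨fun j => sbm.Z j ω, hZa, fun j => rfl⟩
  · rintro ⟨z, hzi, hall⟩
    exact (hall i).trans hzi

lemma prob_Zi (i : Fin n) (a : Fin r) :
    ℙ {ω | sbm.Z i ω = a} = ENNReal.ofReal (sbm.p a) := by
  classical
  rw [sbm.Zi_eq_biUnion i a,
    measure_biUnion_finset (fun z hz z' hz' h => sbm.Ez_disj z z' h)
      (fun z _ => sbm.Ez_meas z)]
  have : ∀ z ∈ Finset.univ.filter (fun z : Fin n → Fin r => z i = a),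
      ℙ {ω | ∀ j, sbm.Z j ω = z j} = ENNReal.ofReal (∏ j, sbm.p (z j)) :=
    fun z _ => sbm.Z_iid z
  rw [Finset.sum_congr rfl this,
    ← ENNReal.ofReal_sum_of_nonneg
      (fun z _ => Finset.prod_nonneg fun j _ => (sbm.p_pos _).le)]
  congr 1
  have hfilter : Finset.univ.filter (fun z : Fin n → Fin r => z i = a)
      = Finset.univ.filter
          (fun z : Fin n → Fin r => ∀ j ∈ ({i} : Finset (Fin n)), z j = (fun _ => a) j) := by
    ext z; simp
  rw [hfilter, fiber_sum sbm.p sbm.p_sum, Finset.prod_singleton]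

lemma Gsum
    (f : Fin r → Fin r → ℝ → ℝ)
    (hFnn : ∀ a b x, 0 ≤ sbm.F a b x)
    (hIic : ∀ a b x, densM (f a b) (Iic x) = ENNReal.ofReal (sbm.F a b x))
    (hprob : ∀ a b, IsProbabilityMeasure (densM (f a b)))
    (i j : Fin n) (hij : i ≠ j) (g : ℝ → ℝ) (hgm : Measurable g)
    (Cg : ℝ) (hgb : ∀ u, |g u| ≤ Cg) (a : Fin r) :
    (∫ ω in {ω | sbm.Z i ω = a}, g (sbm.X i j ω) ∂ℙ) / (ℙ {ω | sbm.Z i ω = a}).toReal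
      = ∑ b, sbm.p b * ∫ y, g y ∂densM (f a b) := by
  classical
  haveI := sbm.prob
  have hint : Integrable (fun ω => g (sbm.X i j ω)) ℙ :=
    bdd_integrable' _ (hgm.comp (sbm.X_meas i j)) Cg (fun ω => hgb _)
  have hnum : (∫ ω in {ω | sbm.Z i ω = a}, g (sbm.X i j ω) ∂ℙ)
      = ∑ b, (sbm.p a * sbm.p b) * ∫ y, g y ∂densM (f a b) := by
    rw [sbm.Zi_eq_biUnion i a, sbm.integral_partition _ hint]
    have e1 : ∀ z ∈ Finset.univ.filter (fun z : Fin n → Fin r => z i = a),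
        (∫ ω in {ω | ∀ j', sbm.Z j' ω = z j'}, g (sbm.X i j ω) ∂ℙ)
          = (∏ m, sbm.p (z m)) * ∫ y, g y ∂densM (f a (z j)) := by
      intro z hz
      have hzi : z i = a := by simpa using hz
      rw [sbm.pair_integral f hFnn hIic hprob i j hij z g hgm, hzi]
    rw [Finset.sum_congr rfl e1]
    rw [← Finset.sum_fiberwise_of_maps_to
      (g := fun z : Fin n → Fin r => z j) (t := Finset.univ)
      (fun z _ => Finset.mem_univ _)
      (fun z => (∏ m, sbm.p (z m)) * ∫ y, g y ∂densM (f a (z j)))]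
    refine Finset.sum_congr rfl fun b _ => ?_
    have e2 : ∀ z ∈ (Finset.univ.filter (fun z : Fin n → Fin r => z i = a)).filter
        (fun z => z j = b),
        (∏ m, sbm.p (z m)) * ∫ y, g y ∂densM (f a (z j))
          = (∏ m, sbm.p (z m)) * ∫ y, g y ∂densM (f a b) := by
      intro z hz
      rw [Finset.mem_filter] at hz
      rw [hz.2]
    rw [Finset.sum_congr rfl e2, ← Finset.sum_mul]
    congr 1
    have hff : (Finset.univ.filter (fun z : Fin n → Fin r => z i = a)).filter
          (fun z => z j = b)
        = Finset.univ.filter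
            (fun z : Fin n → Fin r => ∀ m ∈ ({i, j} : Finset (Fin n)),
              z m = (fun m => if m = i then a else b) m) := by
      ext z
      simp only [Finset.filter_filter, Finset.mem_filter, Finset.mem_univ, true_and,
        Finset.mem_insert, Finset.mem_singleton]
      constructor
      · rintro ⟨h1, h2⟩ m hm
        rcases hm with rfl | rfl
        · simpa using h1
        · simpa [if_neg (Ne.symm hij)] using h2
      · intro hall
        refine ⟨?_, ?_⟩
        · simpa using hall i (Or.inl rfl)
        · simpa [if_neg (Ne.symm hij)] using hall j (Or.inr rfl)
    rw [hff, fiber_sum sbm.p sbm.p_sum]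
    rw [Finset.prod_insert (by simpa using hij), Finset.prod_singleton]
    simp [if_neg (Ne.symm hij)]
  rw [hnum, sbm.prob_Zi i a, ENNReal.toReal_ofReal (sbm.p_pos a).le]
  have e3 : ∑ b, (sbm.p a * sbm.p b) * ∫ y, g y ∂densM (f a b)
      = sbm.p a * ∑ b, sbm.p b * ∫ y, g y ∂densM (f a b) := by
    rw [Finset.mul_sum]
    exact Finset.sum_congr rfl fun b _ => by ring
  rw [e3, mul_comm (sbm.p a), mul_div_assoc, div_self (sbm.p_pos a).ne', mul_one]

end SBM

end AuxAnalysis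

/-- expectation of the smoothed path-graph statistic. Under the
weighted stochastic block model in which every conditional distribution `F z₁ z₂` admits a
bounded density `f z₁ z₂` that is twice differentiable with second derivative bounded by
`B`, and with a bounded symmetric kernel `k` integrating to one with finite second
absolute moment, there is a constant `C` such that for all `x` and `h > 0`, and distinct
nodes `i₁, i₂, i₃, i₄`,
`|E(α_{l₁}(X_{i₁,i₂}) h⁻¹ k((X_{i₂,i₃} − x)/h) α_{l₂}(X_{i₃,i₄}))
  − ∑ z₁ z₂, (G) l₁ z₁ * f z₁ z₂ x * p z₁ * p z₂ * (G) l₂ z₂| ≤ C h²`. -/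
theorem smoothed_path_graph_expectation
    {Ω : Type} [MeasurableSpace Ω] {ℙ : Measure Ω} {n r l : ℕ}
    (sbm : SBM Ω ℙ n r) (hn : 4 ≤ n)
    (f : Fin r → Fin r → ℝ → ℝ) (B Cf : ℝ)
    (hf_density : ∀ z₁ z₂ x, sbm.F z₁ z₂ x = ∫ u in Set.Iic x, f z₁ z₂ u)
    (hf_meas : ∀ z₁ z₂, Measurable (f z₁ z₂))
    (hf_nonneg : ∀ z₁ z₂ u, 0 ≤ f z₁ z₂ u)
    (hf_bdd : ∀ z₁ z₂ u, f z₁ z₂ u ≤ Cf)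
    (hf_diff : ∀ z₁ z₂ u, DifferentiableAt ℝ (f z₁ z₂) u)
    (hf_diff2 : ∀ z₁ z₂ u, DifferentiableAt ℝ (deriv (f z₁ z₂)) u)
    (hf''_bdd : ∀ z₁ z₂ u, |deriv (deriv (f z₁ z₂)) u| ≤ B)
    (k : ℝ → ℝ)
    (hk_meas : Measurable k)
    (hk_bdd : ∃ Ck, ∀ u, |k u| ≤ Ck)
    (hk_symm : ∀ u, k (-u) = k u)
    (hk_one : ∫ u, k u = 1)
    (hk_mom : Integrable fun u => u ^ 2 * |k u|)
    (α : Fin l → ℝ → ℝ)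
    (hα_meas : ∀ l', Measurable (α l'))
    (hα_bdd : ∀ l', ∃ C, ∀ u, |α l' u| ≤ C)
    (G : Matrix (Fin l) (Fin r) ℝ)
    (hG : ∀ i j, i ≠ j → ∀ l' z,
      G l' z = (∫ ω in {ω | sbm.Z i ω = z}, α l' (sbm.X i j ω) ∂ℙ)
                  / (ℙ {ω | sbm.Z i ω = z}).toReal)
    (l₁ l₂ : Fin l)
    (i₁ i₂ i₃ i₄ : Fin n)
    (h12 : i₁ ≠ i₂) (h13 : i₁ ≠ i₃) (h14 : i₁ ≠ i₄)
    (h23 : i₂ ≠ i₃) (h24 : i₂ ≠ i₄) (h34 : i₃ ≠ i₄) :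
    ∃ C : ℝ, ∀ (x h : ℝ), 0 < h →
      |(∫ ω, α l₁ (sbm.X i₁ i₂ ω) * (h⁻¹ * k ((sbm.X i₂ i₃ ω - x) / h))
            * α l₂ (sbm.X i₃ i₄ ω) ∂ℙ)
          - ∑ z₁, ∑ z₂, G l₁ z₁ * f z₁ z₂ x * sbm.p z₁ * sbm.p z₂ * G l₂ z₂|
        ≤ C * h ^ 2 := by
  classical
  haveI := sbm.prob
  obtain ⟨Ck, hCk⟩ := hk_bdd
  obtain ⟨C1, hC1⟩ := hα_bdd l₁
  obtain ⟨C2, hC2⟩ := hα_bdd l₂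
  have hCk0 : 0 ≤ Ck := le_trans (abs_nonneg _) (hCk 0)
  have hC10 : 0 ≤ C1 := le_trans (abs_nonneg _) (hC1 0)
  have hC20 : 0 ≤ C2 := le_trans (abs_nonneg _) (hC2 0)
  have hFnn : ∀ a b x, 0 ≤ sbm.F a b x := by
    intro a b x
    rw [hf_density]
    exact MeasureTheory.setIntegral_nonneg measurableSet_Iic fun u _ => hf_nonneg a b u
  have htend : ∀ a b : Fin r, Filter.Tendsto (fun m : ℕ => ∫ u in Set.Iic (m : ℝ), f a b u)
      Filter.atTop (nhds 1) := by
    intro a b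
    have h0n : 0 < n := by omega
    have h1n : 1 < n := by omega
    set i0 : Fin n := ⟨0, h0n⟩ with hi0
    set i1 : Fin n := ⟨1, h1n⟩ with hi1
    have hi01 : i0 < i1 := by simp [hi0, hi1, Fin.lt_def]
    set z₀ : Fin n → Fin r := fun m => if m = i0 then a else b with hz₀
    set P : ℝ := ∏ m, sbm.p (z₀ m) with hP
    have hPpos : 0 < P := Finset.prod_pos fun m _ => sbm.p_pos _
    have hz00 : z₀ i0 = a := by simp [hz₀]
    have hz01 : z₀ i1 = b := by
      simp only [hz₀]
      rw [if_neg]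
      simp [hi0, hi1, Fin.ext_iff]
    have hmeasS : ∀ x : ℝ,
        ℙ ({ω | sbm.X i0 i1 ω ≤ x} ∩ {ω | ∀ m, sbm.Z m ω = z₀ m})
          = ENNReal.ofReal (sbm.F a b x * P) := by
      intro x
      have hpre : {ω | sbm.X i0 i1 ω ≤ x}
          = {ω | ∀ q ∈ ({(i0, i1)} : Finset (Fin n × Fin n)),
              sbm.X q.1 q.2 ω ≤ (fun _ => x) q} := by
        ext ω; simp
      rw [hpre, sbm.X_cond z₀ {(i0, i1)} (by simpa using hi01) (fun _ => x),
        Finset.prod_singleton]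
      simp only [hz00, hz01, hP]
    have hmono : Monotone (fun m : ℕ =>
        {ω | sbm.X i0 i1 ω ≤ (m : ℝ)} ∩ {ω | ∀ m', sbm.Z m' ω = z₀ m'}) := by
      intro m m' hmm
      refine Set.inter_subset_inter ?_ subset_rfl
      intro ω hω
      simp only [Set.mem_setOf_eq] at hω ⊢
      exact le_trans hω (Nat.cast_le.mpr hmm)
    have hun : (⋃ m : ℕ, ({ω | sbm.X i0 i1 ω ≤ (m : ℝ)} ∩ {ω | ∀ m', sbm.Z m' ω = z₀ m'}))
        = {ω | ∀ m', sbm.Z m' ω = z₀ m'} := by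
      ext ω
      simp only [Set.mem_iUnion, Set.mem_inter_iff, Set.mem_setOf_eq]
      constructor
      · rintro ⟨m, _, h2⟩; exact h2
      · intro hω
        obtain ⟨m, hm⟩ := exists_nat_ge (sbm.X i0 i1 ω)
        exact ⟨m, hm, hω⟩
    have hlim := MeasureTheory.tendsto_measure_iUnion_atTop (μ := ℙ) hmono
    rw [hun, sbm.Z_iid z₀] at hlim
    have hlim2 : Filter.Tendsto (fun m : ℕ => sbm.F a b (m : ℝ) * P)
        Filter.atTop (nhds P) := by
      have hcomp := (ENNReal.tendsto_toReal
        (ENNReal.ofReal_ne_top (r := ∏ m, sbm.p (z₀ m)))).comp hlim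
      rw [ENNReal.toReal_ofReal hPpos.le] at hcomp
      refine hcomp.congr fun m => ?_
      simp only [Function.comp_apply]
      rw [hmeasS, ENNReal.toReal_ofReal (mul_nonneg (hFnn a b _) hPpos.le)]
    have hlim3 : Filter.Tendsto (fun m : ℕ => sbm.F a b (m : ℝ)) Filter.atTop (nhds 1) := by
      have := hlim2.mul_const P⁻¹
      rw [mul_inv_cancel₀ hPpos.ne'] at this
      refine this.congr fun m => ?_
      field_simp
    refine hlim3.congr fun m => ?_
    rw [hf_density]
  have hIntOn : ∀ (a b : Fin r) (x : ℝ), MeasureTheory.IntegrableOn (f a b) (Set.Iic x) :=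
    fun a b => densM_integrableOn (f a b) (htend a b)
  have hIic : ∀ (a b : Fin r) (x : ℝ),
      densM (f a b) (Set.Iic x) = ENNReal.ofReal (sbm.F a b x) := by
    intro a b x
    rw [densM_Iic (f a b) (hf_nonneg a b) (hIntOn a b x), hf_density]
  have hprob : ∀ a b : Fin r, MeasureTheory.IsProbabilityMeasure (densM (f a b)) :=
    fun a b => densM_prob _ (hf_nonneg a b) (htend a b)
  set A1 : Fin r → Fin r → ℝ := fun a b => ∫ y, α l₁ y ∂densM (f a b) with hA1
  set A2 : Fin r → Fin r → ℝ := fun a b => ∫ y, α l₂ y ∂densM (f a b) with hA2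
  have hA1s : ∀ a b, A1 a b = A1 b a := by
    intro a b
    simp only [hA1]
    rw [sbm.densM_symm f hIic hprob a b]
  have hG1 : ∀ b, ∑ a, sbm.p a * A1 a b = G l₁ b := by
    intro b
    have hq := sbm.Gsum f hFnn hIic hprob i₁ i₂ h12 (α l₁) (hα_meas l₁) C1 hC1 b
    rw [hG i₁ i₂ h12 l₁ b, hq]
    exact Finset.sum_congr rfl fun a _ => by rw [hA1s a b]
  have hG2 : ∀ c, ∑ d, sbm.p d * A2 c d = G l₂ c := by
    intro c
    have hq := sbm.Gsum f hFnn hIic hprob i₃ i₄ h34 (α l₂) (hα_meas l₂) C2 hC2 c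
    rw [hG i₃ i₄ h34 l₂ c, hq]
  set Mk : ℝ := ∫ v, v ^ 2 * |k v| with hMk
  refine ⟨∑ b, ∑ c, sbm.p b * sbm.p c * |G l₁ b| * |G l₂ c| * (B * Mk), ?_⟩
  intro x h hh
  set g2 : ℝ → ℝ := fun u => h⁻¹ * k ((u - x) / h) with hg2
  have hg2m : Measurable g2 :=
    measurable_const.mul (hk_meas.comp ((measurable_id.sub measurable_const).div_const h))
  have hg2b : ∀ u, |g2 u| ≤ h⁻¹ * Ck := by
    intro u
    simp only [hg2]
    rw [abs_mul, abs_of_pos (inv_pos.mpr hh)]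
    exact mul_le_mul_of_nonneg_left (hCk _) (inv_pos.mpr hh).le
  set J : Fin r → Fin r → ℝ := fun b c => ∫ y, g2 y ∂densM (f b c) with hJ
  have hJb : ∀ b c, |J b c - f b c x| ≤ B * Mk * h ^ 2 := by
    intro b c
    have hks := kernel_smooth (f b c) B Cf (hf_meas b c) (hf_nonneg b c) (hf_bdd b c)
      (hf_diff b c) (hf_diff2 b c) (hf''_bdd b c) k hk_meas hk_symm hk_one hk_mom x h hh
    have hJeq : J b c = ∫ u, (h⁻¹ * k ((u - x) / h)) * f b c u := by
      simp only [hJ]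
      rw [densM_integral (f b c) (hf_meas b c) (hf_nonneg b c) g2]
      congr 1; ext u
      simp only [hg2]; ring
    rw [hJeq, hMk]
    exact hks
  have hΦm : Measurable (fun ω => α l₁ (sbm.X i₁ i₂ ω)
      * (h⁻¹ * k ((sbm.X i₂ i₃ ω - x) / h)) * α l₂ (sbm.X i₃ i₄ ω)) := by
    refine Measurable.mul (Measurable.mul ?_ ?_) ?_
    · exact (hα_meas l₁).comp (sbm.X_meas i₁ i₂)
    · exact measurable_const.mul
        (hk_meas.comp (((sbm.X_meas i₂ i₃).sub measurable_const).div_const h))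
    · exact (hα_meas l₂).comp (sbm.X_meas i₃ i₄)
  have hΦb : ∀ ω, |α l₁ (sbm.X i₁ i₂ ω) * (h⁻¹ * k ((sbm.X i₂ i₃ ω - x) / h))
      * α l₂ (sbm.X i₃ i₄ ω)| ≤ C1 * (h⁻¹ * Ck) * C2 := by
    intro ω
    rw [abs_mul, abs_mul]
    refine mul_le_mul (mul_le_mul (hC1 _) ?_ (abs_nonneg _) hC10) (hC2 _) (abs_nonneg _)
      (mul_nonneg hC10 (mul_nonneg (inv_pos.mpr hh).le hCk0))
    rw [abs_mul, abs_of_pos (inv_pos.mpr hh)]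
    exact mul_le_mul_of_nonneg_left (hCk _) (inv_pos.mpr hh).le
  have hΦint : MeasureTheory.Integrable (fun ω => α l₁ (sbm.X i₁ i₂ ω)
      * (h⁻¹ * k ((sbm.X i₂ i₃ ω - x) / h)) * α l₂ (sbm.X i₃ i₄ ω)) ℙ :=
    bdd_integrable' _ hΦm _ hΦb
  have hpart : (∫ ω, α l₁ (sbm.X i₁ i₂ ω) * (h⁻¹ * k ((sbm.X i₂ i₃ ω - x) / h))
        * α l₂ (sbm.X i₃ i₄ ω) ∂ℙ)
      = ∑ z : Fin n → Fin r, ∫ ω in {ω | ∀ i, sbm.Z i ω = z i},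
          α l₁ (sbm.X i₁ i₂ ω) * (h⁻¹ * k ((sbm.X i₂ i₃ ω - x) / h))
            * α l₂ (sbm.X i₃ i₄ ω) ∂ℙ := by
    rw [← MeasureTheory.setIntegral_univ, sbm.univ_eq_biUnion,
      sbm.integral_partition _ hΦint Finset.univ]
  have hz : ∀ z : Fin n → Fin r,
      (∫ ω in {ω | ∀ i, sbm.Z i ω = z i}, α l₁ (sbm.X i₁ i₂ ω)
          * (h⁻¹ * k ((sbm.X i₂ i₃ ω - x) / h)) * α l₂ (sbm.X i₃ i₄ ω) ∂ℙ)
        = (∏ i, sbm.p (z i)) *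
            (A1 (z i₁) (z i₂) * (J (z i₂) (z i₃) * A2 (z i₃) (z i₄))) := by
    intro z
    have hpi := sbm.path_integral f hFnn hIic hprob i₁ i₂ i₃ i₄ h12 h13 h14 h23 h24 h34 z
      (α l₁) g2 (α l₂) (hα_meas l₁) hg2m (hα_meas l₂)
    simp only [hA1, hA2, hJ]
    exact hpi
  rw [hpart, Finset.sum_congr rfl (fun z _ => hz z),
    sum_labels sbm.p sbm.p_sum i₁ i₂ i₃ i₄ h12 h13 h14 h23 h24 h34
      (fun a b c d => A1 a b * (J b c * A2 c d))]
  have hsum4 : (∑ a, ∑ b, ∑ c, ∑ d,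
        sbm.p a * sbm.p b * sbm.p c * sbm.p d * (A1 a b * (J b c * A2 c d)))
      = ∑ b, ∑ c, sbm.p b * sbm.p c
          * ((∑ a, sbm.p a * A1 a b) * (∑ d, sbm.p d * A2 c d)) * J b c := by
    rw [Finset.sum_comm]
    refine Finset.sum_congr rfl fun b _ => ?_
    rw [Finset.sum_comm]
    refine Finset.sum_congr rfl fun c _ => ?_
    rw [Finset.sum_mul_sum]
    simp only [Finset.mul_sum, Finset.sum_mul]
    exact Finset.sum_congr rfl fun a _ => Finset.sum_congr rfl fun d _ => by ring
  rw [hsum4,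
    show (∑ b, ∑ c, sbm.p b * sbm.p c
          * ((∑ a, sbm.p a * A1 a b) * (∑ d, sbm.p d * A2 c d)) * J b c)
        = ∑ b, ∑ c, sbm.p b * sbm.p c * (G l₁ b * G l₂ c) * J b c from
      Finset.sum_congr rfl fun b _ => Finset.sum_congr rfl fun c _ => by
        rw [hG1 b, hG2 c]]
  have hdiff : (∑ b, ∑ c, sbm.p b * sbm.p c * (G l₁ b * G l₂ c) * J b c)
      - (∑ z₁, ∑ z₂, G l₁ z₁ * f z₁ z₂ x * sbm.p z₁ * sbm.p z₂ * G l₂ z₂)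
      = ∑ b, ∑ c, sbm.p b * sbm.p c * (G l₁ b * G l₂ c) * (J b c - f b c x) := by
    rw [← Finset.sum_sub_distrib]
    refine Finset.sum_congr rfl fun b _ => ?_
    rw [← Finset.sum_sub_distrib]
    exact Finset.sum_congr rfl fun c _ => by ring
  rw [hdiff]
  have hterm : ∀ b c, |sbm.p b * sbm.p c * (G l₁ b * G l₂ c) * (J b c - f b c x)|
      ≤ sbm.p b * sbm.p c * |G l₁ b| * |G l₂ c| * (B * Mk) * h ^ 2 := by
    intro b c
    rw [abs_mul]
    have e1 : |sbm.p b * sbm.p c * (G l₁ b * G l₂ c)|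
        = sbm.p b * sbm.p c * |G l₁ b| * |G l₂ c| := by
      rw [abs_mul, abs_mul, abs_mul, abs_of_nonneg (sbm.p_pos b).le,
        abs_of_nonneg (sbm.p_pos c).le]
      ring
    rw [e1]
    calc sbm.p b * sbm.p c * |G l₁ b| * |G l₂ c| * |J b c - f b c x|
        ≤ sbm.p b * sbm.p c * |G l₁ b| * |G l₂ c| * (B * Mk * h ^ 2) := by
          exact mul_le_mul_of_nonneg_left (hJb b c)
            (mul_nonneg (mul_nonneg (mul_nonneg (sbm.p_pos b).le (sbm.p_pos c).le)
              (abs_nonneg _)) (abs_nonneg _))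
    _ = sbm.p b * sbm.p c * |G l₁ b| * |G l₂ c| * (B * Mk) * h ^ 2 := by ring
  calc |∑ b, ∑ c, sbm.p b * sbm.p c * (G l₁ b * G l₂ c) * (J b c - f b c x)|
      ≤ ∑ b, |∑ c, sbm.p b * sbm.p c * (G l₁ b * G l₂ c) * (J b c - f b c x)| :=
        Finset.abs_sum_le_sum_abs _ _
  _ ≤ ∑ b, ∑ c, |sbm.p b * sbm.p c * (G l₁ b * G l₂ c) * (J b c - f b c x)| :=
        Finset.sum_le_sum fun b _ => Finset.abs_sum_le_sum_abs _ _
  _ ≤ ∑ b, ∑ c, sbm.p b * sbm.p c * |G l₁ b| * |G l₂ c| * (B * Mk) * h ^ 2 :=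
        Finset.sum_le_sum fun b _ => Finset.sum_le_sum fun c _ => hterm b c
  _ = (∑ b, ∑ c, sbm.p b * sbm.p c * |G l₁ b| * |G l₂ c| * (B * Mk)) * h ^ 2 := by
        rw [Finset.sum_mul]
        exact Finset.sum_congr rfl fun b _ => by rw [Finset.sum_mul]
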